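/- For fixed r ≥ d+1 ≥ 3, the maximum number of edges in an ordered n-vertex r-graph containing no interval r-partite copy of any d-dimensional r-simplex is O(n^{r-1}); explicitly, ex_→(n, ord(𝓢_d^r)) ≤ r^{10dr}·n^{r-1}. -/

import Mathlib

/-- An interval in ℕ: a set of consecutive integers. -/
def IsIntervalN (I : Finset ℕ) : Prop := ∃ a b : ℕ, I = Finset.Icc a b

/-- Every element of `I` is smaller than every element of `J`. -/
def Precedes (I J : Finset ℕ) : Prop := ∀ x ∈ I, ∀ y ∈ J, x < y

/-- An ordered hypergraph `H` is interval k-partite with parts of size at most `m`: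
there are ℓ ≥ k disjoint intervals I₀ < I₁ < ⋯ < I_{ℓ-1}, each of size at most `m`,
such that every edge of `H` is contained in their union and intersects each of them. -/
def IntervalKPartiteB (k m : ℕ) (H : Finset (Finset ℕ)) : Prop :=
  ∃ ℓ, k ≤ ℓ ∧ ∃ I : ℕ → Finset ℕ,
    (∀ j < ℓ, IsIntervalN (I j)) ∧
    (∀ j < ℓ, (I j).card ≤ m) ∧
    (∀ j j', j < j' → j' < ℓ → Precedes (I j) (I j')) ∧
    ∀ e ∈ H, (∀ x ∈ e, ∃ j < ℓ, x ∈ I j) ∧ (∀ j < ℓ, (e ∩ I j).Nonempty)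

/-- An ordered hypergraph `H` is interval k-partite: there are ℓ ≥ k disjoint
intervals I₀ < I₁ < ⋯ < I_{ℓ-1} such that every edge of `H` is contained in
their union and intersects each of them. -/
def IntervalKPartite (k : ℕ) (H : Finset (Finset ℕ)) : Prop :=
  ∃ ℓ, k ≤ ℓ ∧ ∃ I : ℕ → Finset ℕ,
    (∀ j < ℓ, IsIntervalN (I j)) ∧
    (∀ j j', j < j' → j' < ℓ → Precedes (I j) (I j')) ∧
    ∀ e ∈ H, (∀ x ∈ e, ∃ j < ℓ, x ∈ I j) ∧ (∀ j < ℓ, (e ∩ I j).Nonempty)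

/-- An ordered hypergraph `H` is interval r-partite in the exact sense: there are
intervals I₀ < I₁ < ⋯ < I_{r-1} such that every edge of `H` has exactly one
vertex in each of them (and is contained in their union). -/
def IntervalPartiteExact (r : ℕ) (H : Finset (Finset ℕ)) : Prop :=
  ∃ I : ℕ → Finset ℕ,
    (∀ j < r, IsIntervalN (I j)) ∧
    (∀ j j', j < j' → j' < r → Precedes (I j) (I j')) ∧
    ∀ e ∈ H, (∀ x ∈ e, ∃ j < r, x ∈ I j) ∧ (∀ j < r, (e ∩ I j).card = 1)

/-- `H` contains an interval s-partite copy of the hypergraph `F`. -/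
def ContainsOrdCopy (s : ℕ) (F H : Finset (Finset ℕ)) : Prop :=
  ∃ f : ℕ → ℕ, Set.InjOn f ↑(F.sup id) ∧
    F.image (fun e => e.image f) ⊆ H ∧
    IntervalPartiteExact s (F.image (fun e => e.image f))

/-- A d-dimensional r-simplex: d+1 edges of size r such that every d of them
have a common vertex but all d+1 have empty intersection. -/
def IsSimplex (d r : ℕ) (F : Finset (Finset ℕ)) : Prop :=
  F.card = d + 1 ∧ (∀ e ∈ F, e.card = r) ∧
  (∀ G ⊆ F, G.card = d → ∃ x, ∀ e ∈ G, x ∈ e) ∧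
  ¬ ∃ x, ∀ e ∈ F, x ∈ e

namespace OrdSimplex
open Finset
attribute [local instance] Classical.propDecidable

lemma sup_id_mem {e : Finset ℕ} (he : e.Nonempty) : e.sup id ∈ e := by
  have h := e.max'_mem he
  rwa [Finset.max'_eq_sup', Finset.sup'_eq_sup] at h

lemma le_sup_id {e : Finset ℕ} {x : ℕ} (hx : x ∈ e) : x ≤ e.sup id :=
  Finset.le_sup (f := id) hx

lemma eq_erase_of_subset_card {F G : Finset (Finset ℕ)} {m : ℕ}
    (hGF : G ⊆ F) (hF : F.card = m + 1) (hG : G.card = m) :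
    ∃ t ∈ F, G = F.erase t := by
  have h1 : (F \ G).card = 1 := by
    rw [Finset.card_sdiff_of_subset hGF, hF, hG]; omega
  obtain ⟨t, ht⟩ := Finset.card_eq_one.mp h1
  have htF : t ∈ F := by
    have h2 : t ∈ F \ G := ht ▸ Finset.mem_singleton_self t
    exact (Finset.mem_sdiff.mp h2).1
  refine ⟨t, htF, ?_⟩
  ext x
  constructor
  · intro hxG
    refine Finset.mem_erase.mpr ⟨fun hxe => ?_, hGF hxG⟩
    have h2 : x ∈ F \ G := by rw [ht, hxe]; exact Finset.mem_singleton_self t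
    exact (Finset.mem_sdiff.mp h2).2 hxG
  · intro hx
    obtain ⟨hxt, hxF⟩ := Finset.mem_erase.mp hx
    by_contra hxG
    have h3 : x ∈ F \ G := Finset.mem_sdiff.mpr ⟨hxF, hxG⟩
    rw [ht] at h3
    exact hxt (Finset.mem_singleton.mp h3)

lemma top_le_one (A : Finset ℕ) :
    (A.filter (fun c => ∀ c' ∈ A, c' ≤ c)).card ≤ 1 := by
  refine Finset.card_le_one.mpr ?_
  intro a ha b hb
  obtain ⟨haA, ha2⟩ := Finset.mem_filter.mp ha
  obtain ⟨hbA, hb2⟩ := Finset.mem_filter.mp hb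
  exact le_antisymm (hb2 a haA) (ha2 b hbA)

lemma dtop_card (A : Finset ℕ) (d : ℕ) :
    (A.filter (fun c => (A.filter (fun y => c < y)).card ≤ d)).card ≤ d + 1 := by
  classical
  have main : (A.filter (fun c => (A.filter (fun y => c < y)).card ≤ d)).card
      ≤ (Finset.range (d+1)).card := by
    apply Finset.card_le_card_of_injOn (fun c => (A.filter (fun y => c < y)).card)
    · intro c hc
      obtain ⟨-, hc2⟩ := Finset.mem_filter.mp hc
      exact Finset.mem_range.mpr (Nat.lt_succ_of_le hc2)
    · intro c1 h1 c2 h2 heq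
      by_contra hne
      obtain ⟨h1A, -⟩ := Finset.mem_filter.mp h1
      obtain ⟨h2A, -⟩ := Finset.mem_filter.mp h2
      have key : ∀ a b : ℕ, a ∈ A → b ∈ A → a < b →
          (A.filter (fun y => b < y)).card < (A.filter (fun y => a < y)).card := by
        intro a b haA hbA hab
        have hsub : insert b (A.filter (fun y => b < y)) ⊆ A.filter (fun y => a < y) := by
          intro y hy
          rcases Finset.mem_insert.mp hy with rfl | hy2
          · exact Finset.mem_filter.mpr ⟨hbA, hab⟩
          · obtain ⟨hyA, hby⟩ := Finset.mem_filter.mp hy2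
            exact Finset.mem_filter.mpr ⟨hyA, lt_trans hab hby⟩
        have hb : b ∉ A.filter (fun y => b < y) := by
          intro hmem
          exact lt_irrefl b (Finset.mem_filter.mp hmem).2
        calc (A.filter (fun y => b < y)).card
            < (insert b (A.filter (fun y => b < y))).card := by
              rw [Finset.card_insert_of_notMem hb]; omega
          _ ≤ (A.filter (fun y => a < y)).card := Finset.card_le_card hsub
      have heq' : (A.filter (fun y => c1 < y)).card = (A.filter (fun y => c2 < y)).card := heq
      rcases lt_or_gt_of_ne hne with h | h
      · exact absurd heq' (Nat.ne_of_gt (key c1 c2 h1A h2A h))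
      · exact absurd heq'.symm (Nat.ne_of_gt (key c2 c1 h2A h1A h))
  simpa using main

lemma sdr : ∀ (s : Finset (Finset ℕ)) (A : Finset ℕ → Finset ℕ),
    (∀ a ∈ s, s.card ≤ (A a).card) →
    ∃ f : Finset ℕ → ℕ, Set.InjOn f ↑s ∧ ∀ a ∈ s, f a ∈ A a := by
  intro s
  induction s using Finset.induction_on with
  | empty =>
      intro A _
      exact ⟨fun _ => 0, by simp, by simp⟩
  | insert a s ha ih =>
      intro A hA
      have hcard : s.card + 1 ≤ (A a).card := by
        have := hA a (Finset.mem_insert_self a s)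
        rwa [Finset.card_insert_of_notMem ha] at this
      have hne : (A a).Nonempty := Finset.card_pos.mp (by omega)
      obtain ⟨b, hb⟩ := hne
      have hside : ∀ x ∈ s, s.card ≤ ((A x).erase b).card := by
        intro x hx
        have h1 := hA x (Finset.mem_insert_of_mem hx)
        have h2 := Finset.pred_card_le_card_erase (s := A x) (a := b)
        rw [Finset.card_insert_of_notMem ha] at h1
        omega
      obtain ⟨f, hinj, hf⟩ := ih (fun x => (A x).erase b) hside
      refine ⟨Function.update f a b, ?_, ?_⟩
      · intro x hx y hy hxy
        simp only [Finset.coe_insert, Set.mem_insert_iff] at hx hy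
        rcases hx with rfl | hx <;> rcases hy with rfl | hy
        · rfl
        · rw [Function.update_self, Function.update_of_ne (by rintro rfl; exact ha hy)] at hxy
          have hm := hf y hy
          rw [← hxy] at hm
          exact absurd hm (by simp)
        · rw [Function.update_of_ne (by rintro rfl; exact ha hx), Function.update_self] at hxy
          have hm := hf x hx
          rw [hxy] at hm
          exact absurd hm (by simp)
        · rw [Function.update_of_ne (by rintro rfl; exact ha hx),
            Function.update_of_ne (by rintro rfl; exact ha hy)] at hxy
          exact hinj hx hy hxy
      · intro x hx
        rcases Finset.mem_insert.mp hx with rfl | hx2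
        · rw [Function.update_self]; exact hb
        · rw [Function.update_of_ne (by rintro rfl; exact ha hx2)]
          exact Finset.mem_of_mem_erase (hf x hx2)




def SysK (k : ℕ) (T U : Finset (Finset ℕ)) : Prop :=
  ∃ a b : ℕ → ℕ,
    (∀ p, p + 1 < k → max (a p) (b p) < min (a (p+1)) (b (p+1))) ∧
    (∀ p, p < k → a p ≠ b p) ∧
    ((Finset.range k).image a ∈ U) ∧
    (∀ j, j < k → (Finset.range k).image (fun p => if p = j then b p else a p) ∈ T)

lemma sys_chain {a b : ℕ → ℕ} {k : ℕ}
    (h : ∀ p, p + 1 < k → max (a p) (b p) < min (a (p+1)) (b (p+1))) :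
    ∀ p q, p < q → q < k → max (a p) (b p) < min (a q) (b q) := by
  intro p q
  induction q with
  | zero => intro h1 _; omega
  | succ q ih =>
      intro hpq hqk
      rcases Nat.lt_succ_iff_lt_or_eq.mp hpq with h2 | h2
      · calc max (a p) (b p) < min (a q) (b q) := ih h2 (by omega)
          _ ≤ max (a q) (b q) := min_le_max
          _ < min (a (q+1)) (b (q+1)) := h q hqk
      · subst h2; exact h p hqk

lemma sys_vals_lt {a b : ℕ → ℕ} {k : ℕ}
    (h : ∀ p, p + 1 < k → max (a p) (b p) < min (a (p+1)) (b (p+1)))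
    {p q : ℕ} (hpq : p < q) (hq : q < k) :
    a p < a q ∧ a p < b q ∧ b p < a q ∧ b p < b q := by
  have hc := sys_chain h p q hpq hq
  have h1 : a p ≤ max (a p) (b p) := le_max_left _ _
  have h2 : b p ≤ max (a p) (b p) := le_max_right _ _
  have h3 : min (a q) (b q) ≤ a q := min_le_left _ _
  have h4 : min (a q) (b q) ≤ b q := min_le_right _ _
  omega

lemma image_range_succ {g : ℕ → ℕ} {k : ℕ} :
    (Finset.range (k+1)).image g = insert (g k) ((Finset.range k).image g) := by
  rw [Finset.range_add_one, Finset.image_insert]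

lemma ads_lift {n k c : ℕ} {T' U T'' U'' : Finset (Finset ℕ)}
    (hT'' : ∀ z ∈ T'', insert c z ∈ T' ∧ ∀ x ∈ z, x < c)
    (hU'' : ∀ z ∈ U'', (∀ x ∈ z, x < c) ∧ insert c z ∈ U ∧
        ∃ c' ∈ Finset.Icc (c+1) n, insert c' z ∈ T')
    (hS : SysK k T'' U'') : SysK (k+1) T' U := by
  obtain ⟨a, b, hal, hne, hbase, hdev⟩ := hS
  obtain ⟨hltU, hcU, c', hc'mem, hc'T⟩ := hU'' _ hbase
  have hcc' : c < c' := by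
    have := (Finset.mem_Icc.mp hc'mem).1; omega
  have hapc : ∀ p, p < k → a p < c := by
    intro p hp
    exact hltU (a p) (Finset.mem_image.mpr ⟨p, Finset.mem_range.mpr hp, rfl⟩)
  have hbpc : ∀ p, p < k → b p < c := by
    intro p hp
    have hmem := (hT'' _ (hdev p hp)).2
    refine hmem (b p) (Finset.mem_image.mpr ⟨p, Finset.mem_range.mpr hp, ?_⟩)
    simp
  refine ⟨fun p => if p = k then c else a p, fun p => if p = k then c' else b p,
    ?_, ?_, ?_, ?_⟩
  · intro p hp
    beta_reduce
    by_cases hpk : p + 1 < k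
    · rw [if_neg (show ¬ p = k by omega), if_neg (show ¬ p = k by omega),
        if_neg (show ¬ p + 1 = k by omega), if_neg (show ¬ p + 1 = k by omega)]
      exact hal p hpk
    · have hp1 : p + 1 = k := by omega
      rw [if_neg (show ¬ p = k by omega), if_neg (show ¬ p = k by omega),
        if_pos hp1, if_pos hp1]
      rw [min_eq_left (le_of_lt hcc')]
      exact Nat.max_lt.mpr ⟨hapc p (by omega), hbpc p (by omega)⟩
  · intro p hp
    beta_reduce
    by_cases hpk : p = k
    · rw [if_pos hpk, if_pos hpk]; exact Nat.ne_of_lt hcc'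
    · rw [if_neg hpk, if_neg hpk]; exact hne p (by omega)
  · rw [image_range_succ]
    beta_reduce
    rw [if_pos rfl]
    have himg : (Finset.range k).image (fun p => if p = k then c else a p)
        = (Finset.range k).image a := by
      apply Finset.image_congr
      intro p hp
      simp only [Finset.coe_range, Set.mem_Iio] at hp
      exact if_neg (by omega)
    rw [himg]
    exact hcU
  · intro j hj
    rw [image_range_succ]
    beta_reduce
    by_cases hjk : j = k
    · subst hjk
      rw [if_pos rfl, if_pos rfl]
      have himg : (Finset.range j).image
          (fun p => if p = j then (if p = j then c' else b p) else (if p = j then c else a p))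
          = (Finset.range j).image a := by
        apply Finset.image_congr
        intro p hp
        simp only [Finset.coe_range, Set.mem_Iio] at hp
        have hpj : ¬ p = j := by omega
        simp [hpj]
      rw [himg]
      exact hc'T
    · have hjlt : j < k := by omega
      rw [if_neg (show ¬ k = j by omega), if_pos rfl]
      have himg : (Finset.range k).image
          (fun p => if p = j then (if p = k then c' else b p) else (if p = k then c else a p))
          = (Finset.range k).image (fun p => if p = j then b p else a p) := by
        apply Finset.image_congr
        intro p hp
        simp only [Finset.coe_range, Set.mem_Iio] at hp
        have hpk : ¬ p = k := by omega
        by_cases hpj : p = j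
        · simp [hpj, hpk, hjk]
        · simp [hpj, hpk, hjk]
      rw [himg]
      exact (hT'' _ (hdev j hjlt)).1

def apexSet (n : ℕ) (T : Finset (Finset ℕ)) (z : Finset ℕ) : Finset ℕ :=
  (Finset.Icc 1 n).filter (fun c => (∀ x ∈ z, x < c) ∧ insert c z ∈ T)

lemma scan (n k m g : ℕ) (hk : 1 ≤ k) (T : Finset (Finset ℕ))
    (P : ℕ → Finset ℕ → Prop)
    (hT : ∀ e ∈ T, e.card = k ∧ e ⊆ Finset.Icc 1 n)
    (hbad : ∀ z ∈ (Finset.Icc 1 n).powersetCard (k-1), ∀ S : Finset ℕ,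
      S ⊆ apexSet n T z → (∀ c ∈ S, ¬ P c z) → S.card ≤ m)
    (hcell : ∀ c ∈ Finset.Icc 1 n, ∀ S : Finset (Finset ℕ),
      S ⊆ (Finset.Icc 1 n).powersetCard (k-1) → (∀ z ∈ S, P c z) → S.card ≤ g) :
    T.card ≤ ((Finset.Icc 1 n).powersetCard (k-1)).card * m + n * g := by
  classical
  set B := (Finset.Icc 1 n).powersetCard (k-1) with hB
  have hbody : ∀ e ∈ T, e.erase (e.sup id) ∈ B := by
    intro e he
    obtain ⟨hcard, hsub⟩ := hT e he
    have hne : e.Nonempty := Finset.card_pos.mp (by omega)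
    rw [hB, Finset.mem_powersetCard]
    constructor
    · exact (Finset.erase_subset _ _).trans hsub
    · rw [Finset.card_erase_of_mem (sup_id_mem hne), hcard]
  have hsum : T.card = ∑ z ∈ B, (T.filter (fun e => e.erase (e.sup id) = z)).card :=
    Finset.card_eq_sum_card_fiberwise hbody
  have hfiber : ∀ z ∈ B, (T.filter (fun e => e.erase (e.sup id) = z)).card
      ≤ (apexSet n T z).card := by
    intro z _
    apply Finset.card_le_card_of_injOn (fun e => e.sup id)
    · intro e he
      obtain ⟨heT, hez⟩ := Finset.mem_filter.mp he
      obtain ⟨hcard, hsub⟩ := hT e heT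
      have hne : e.Nonempty := Finset.card_pos.mp (by omega)
      have hsm : e.sup id ∈ e := sup_id_mem hne
      refine Finset.mem_filter.mpr ⟨hsub hsm, ?_, ?_⟩
      · intro x hx
        rw [← hez] at hx
        obtain ⟨hxne, hxe⟩ := Finset.mem_erase.mp hx
        exact lt_of_le_of_ne (le_sup_id hxe) hxne
      · rw [← hez, Finset.insert_erase hsm]
        exact heT
    · intro e1 h1 e2 h2 heq
      obtain ⟨h1T, h1z⟩ := Finset.mem_filter.mp (Finset.mem_coe.mp h1)
      obtain ⟨h2T, h2z⟩ := Finset.mem_filter.mp (Finset.mem_coe.mp h2)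
      have hc1 : e1.card = k := (hT e1 h1T).1
      have hc2 : e2.card = k := (hT e2 h2T).1
      have hne1 : e1.Nonempty := Finset.card_pos.mp (by omega)
      have hne2 : e2.Nonempty := Finset.card_pos.mp (by omega)
      calc e1 = insert (e1.sup id) (e1.erase (e1.sup id)) :=
            (Finset.insert_erase (sup_id_mem hne1)).symm
        _ = insert (e2.sup id) (e2.erase (e2.sup id)) := by
            have heq' : e1.sup id = e2.sup id := heq
            rw [h1z, h2z, heq']
        _ = e2 := Finset.insert_erase (sup_id_mem hne2)
  have hsplit : ∀ z ∈ B, (apexSet n T z).card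
      ≤ m + ((Finset.Icc 1 n).filter (fun c => P c z)).card := by
    intro z hz
    have h1 : (apexSet n T z).filter (fun c => P c z)
        ⊆ (Finset.Icc 1 n).filter (fun c => P c z) :=
      Finset.filter_subset_filter _ (Finset.filter_subset _ _)
    have h2 := Finset.card_filter_add_card_filter_not
      (s := apexSet n T z) (p := fun c => P c z)
    have h3 : ((apexSet n T z).filter (fun c => ¬ P c z)).card ≤ m := by
      refine hbad z hz _ (Finset.filter_subset _ _) ?_
      intro c hc
      exact (Finset.mem_filter.mp hc).2
    have h4 := Finset.card_le_card h1
    omega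
  have hswap : ∑ z ∈ B, ((Finset.Icc 1 n).filter (fun c => P c z)).card
      = ∑ c ∈ Finset.Icc 1 n, (B.filter (fun z => P c z)).card := by
    calc ∑ z ∈ B, ((Finset.Icc 1 n).filter (fun c => P c z)).card
        = ∑ z ∈ B, ∑ c ∈ Finset.Icc 1 n, if P c z then 1 else 0 := by
          apply Finset.sum_congr rfl; intro z _; rw [Finset.card_filter]
      _ = ∑ c ∈ Finset.Icc 1 n, ∑ z ∈ B, if P c z then 1 else 0 := Finset.sum_comm
      _ = ∑ c ∈ Finset.Icc 1 n, (B.filter (fun z => P c z)).card := by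
          apply Finset.sum_congr rfl; intro c _; rw [Finset.card_filter]
  have hcellsum : ∑ c ∈ Finset.Icc 1 n, (B.filter (fun z => P c z)).card ≤ n * g := by
    calc ∑ c ∈ Finset.Icc 1 n, (B.filter (fun z => P c z)).card
        ≤ ∑ _c ∈ Finset.Icc 1 n, g := by
          apply Finset.sum_le_sum
          intro c hc
          refine hcell c hc _ (Finset.filter_subset _ _) ?_
          intro z hzf
          exact (Finset.mem_filter.mp hzf).2
      _ = n * g := by rw [Finset.sum_const, Nat.card_Icc, smul_eq_mul]; simp
  calc T.card = ∑ z ∈ B, (T.filter (fun e => e.erase (e.sup id) = z)).card := hsum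
    _ ≤ ∑ z ∈ B, (m + ((Finset.Icc 1 n).filter (fun c => P c z)).card) := by
        apply Finset.sum_le_sum; intro z hz; exact le_trans (hfiber z hz) (hsplit z hz)
    _ = B.card * m + ∑ z ∈ B, ((Finset.Icc 1 n).filter (fun c => P c z)).card := by
        rw [Finset.sum_add_distrib, Finset.sum_const, smul_eq_mul]
    _ ≤ B.card * m + n * g := by
        rw [hswap]; omega

theorem ads (n : ℕ) : ∀ k, 1 ≤ k → ∀ T' U : Finset (Finset ℕ), T' ⊆ U →
    (∀ e ∈ T', e.card = k ∧ e ⊆ Finset.Icc 1 n) → ¬ SysK k T' U →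
    T'.card ≤ k * n ^ (k-1) := by
  intro k hk
  induction k, hk using Nat.le_induction with
  | base =>
      intro T' U hTU hmem hno
      have hone : 1 * n ^ (1-1) = 1 := by norm_num
      rw [hone]
      by_contra hcard
      have h2 : 1 < T'.card := by omega
      obtain ⟨e1, he1, e2, he2, hne⟩ := Finset.one_lt_card.mp h2
      obtain ⟨x, hx⟩ := Finset.card_eq_one.mp (hmem e1 he1).1
      obtain ⟨y, hy⟩ := Finset.card_eq_one.mp (hmem e2 he2).1
      have hxy : x ≠ y := by
        intro h; apply hne; rw [hx, hy, h]
      apply hno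
      refine ⟨fun _ => y, fun _ => x, ?_, ?_, ?_, ?_⟩
      · intro p hp; omega
      · intro p hp; exact hxy.symm
      · have : (Finset.range 1).image (fun _ => y) = {y} := by simp
        rw [this, ← hy]; exact hTU he2
      · intro j hj
        have : (Finset.range 1).image (fun p => if p = j then x else y) = {(if 0 = j then x else y)} := by
          simp
        rw [this]
        have hj0 : j = 0 := by omega
        subst hj0
        rw [if_pos rfl, ← hx]
        exact he1
  | succ k hk ih =>
      intro T' U hTU hmem hno
      have hexp : (k+1) - 1 = k := by omega
      have hmain := scan n (k+1) 1 (k * n ^ (k-1)) (by omega) T'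
        (fun c z => (∀ x ∈ z, x < c) ∧ insert c z ∈ T' ∧
            ∃ c' ∈ Finset.Icc (c+1) n, insert c' z ∈ T') hmem ?hbad ?hcell
      case hbad =>
        intro z _ S hSsub hSnP
        refine le_trans (Finset.card_le_card ?_) (top_le_one (apexSet n T' z))
        intro c hc
        have hcA := hSsub hc
        refine Finset.mem_filter.mpr ⟨hcA, ?_⟩
        intro c' hc'A
        by_contra hlt
        obtain ⟨hcI, hclt, hcins⟩ := Finset.mem_filter.mp hcA
        obtain ⟨hc'I, hc'lt, hc'ins⟩ := Finset.mem_filter.mp hc'A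
        exact hSnP c hc ⟨hclt, hcins, c',
          Finset.mem_Icc.mpr ⟨by omega, (Finset.mem_Icc.mp hc'I).2⟩, hc'ins⟩
      case hcell =>
        intro c _ S hSsub hSP
        classical
        refine ih S ((Finset.Icc 1 n).powersetCard k |>.filter (fun z =>
          (∀ x ∈ z, x < c) ∧ insert c z ∈ U ∧
            ∃ c' ∈ Finset.Icc (c+1) n, insert c' z ∈ T')) ?_ ?_ ?_
        · intro z hz
          have hzB := hSsub hz
          rw [hexp] at hzB
          obtain ⟨h1, h2, h3⟩ := hSP z hz
          simp only [Finset.mem_filter]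
          exact ⟨hzB, h1, hTU h2, h3⟩
        · intro e he
          have heB := hSsub he
          rw [hexp, Finset.mem_powersetCard] at heB
          exact ⟨heB.2, heB.1⟩
        · intro hS
          apply hno
          refine ads_lift (n := n) (c := c) ?_ ?_ hS
          · intro z hz
            obtain ⟨h1, h2, h3⟩ := hSP z hz
            exact ⟨h2, h1⟩
          · intro z hz
            simp only [Finset.mem_filter] at hz
            exact hz.2
      refine le_trans hmain ?_
      have hBcard : ((Finset.Icc 1 n).powersetCard ((k+1)-1)).card ≤ n ^ k := by
        rw [hexp, Finset.card_powersetCard, Nat.card_Icc]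
        simpa using Nat.choose_le_pow n k
      have hnk : n * (k * n ^ (k-1)) = k * n ^ k := by
        have h1 : k - 1 + 1 = k := by omega
        calc n * (k * n ^ (k-1)) = k * (n ^ (k-1) * n) := by ring
          _ = k * n ^ (k-1+1) := by rw [pow_succ]
          _ = k * n ^ k := by rw [h1]
      have hgoalexp : (k+1) * n ^ ((k+1)-1) = n ^ k + k * n ^ k := by
        rw [hexp]; ring
      rw [hgoalexp]
      omega

def GoodCopy (d r : ℕ) (H : Finset (Finset ℕ)) : Prop :=
  ∃ F : Finset (Finset ℕ), F ⊆ H ∧ IsSimplex d r F ∧ IntervalPartiteExact r F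


lemma lift_base {d c : ℕ} (hd : 2 ≤ d) {H T U : Finset (Finset ℕ)}
    (hT : ∀ z ∈ T, (∀ x ∈ z, x < c) ∧ insert c z ∈ H)
    (hU : ∀ z ∈ U, (∀ x ∈ z, x < c) ∧ ∃ c', c < c' ∧ insert c' z ∈ H)
    (hS : SysK d T U) : GoodCopy d (d+1) H := by
  classical
  obtain ⟨a, b, hal, hne, hbase, hdev⟩ := hS
  obtain ⟨hz0lt, c', hcc', hz0H⟩ := hU _ hbase
  -- basic value facts
  have hac : ∀ p, p < d → a p < c := by
    intro p hp
    exact hz0lt (a p) (Finset.mem_image.mpr ⟨p, Finset.mem_range.mpr hp, rfl⟩)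
  have hbc : ∀ p, p < d → b p < c := by
    intro p hp
    refine (hT _ (hdev p hp)).1 (b p) ?_
    exact Finset.mem_image.mpr ⟨p, Finset.mem_range.mpr hp, by simp⟩
  have hsep : ∀ p q u w, p < d → q < d → p ≠ q →
      (u = a p ∨ u = b p) → (w = a q ∨ w = b q) → u ≠ w := by
    intro p q u w hp hq hpq hu hw
    rcases Nat.lt_or_ge p q with h | h
    · have hv := sys_vals_lt hal h hq
      rcases hu with rfl | rfl <;> rcases hw with rfl | rfl <;> omega
    · have hqp : q < p := by omega
      have hv := sys_vals_lt hal hqp hp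
      rcases hu with rfl | rfl <;> rcases hw with rfl | rfl <;> omega
  -- the edge sets
  set z0 : Finset ℕ := (Finset.range d).image a with hz0def
  set E : ℕ → Finset ℕ :=
    fun j => insert c ((Finset.range d).image (fun p => if p = j then b p else a p)) with hEdef
  set El : Finset ℕ := insert c' z0 with hEldef
  set F : Finset (Finset ℕ) := insert El ((Finset.range d).image E) with hFdef
  -- membership characterizations
  have hEmem : ∀ j x, x ∈ E j ↔ x = c ∨ ∃ p, p < d ∧ (if p = j then b p else a p) = x := by
    intro j x
    rw [hEdef]
    simp [Finset.mem_insert, Finset.mem_image, Finset.mem_range]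
  have hElmem : ∀ x, x ∈ El ↔ x = c' ∨ ∃ p, p < d ∧ a p = x := by
    intro x
    rw [hEldef, hz0def]
    simp [Finset.mem_insert, Finset.mem_image, Finset.mem_range]
  have hFmem : ∀ e, e ∈ F ↔ e = El ∨ ∃ j, j < d ∧ E j = e := by
    intro e
    rw [hFdef]
    simp [Finset.mem_insert, Finset.mem_image, Finset.mem_range]
  -- all elements of E j other than c are < c
  have hEltc : ∀ j x, x ∈ E j → x ≠ c → x < c := by
    intro j x hx hxc
    rcases (hEmem j x).mp hx with rfl | ⟨p, hp, hv⟩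
    · exact absurd rfl hxc
    · rcases Nat.decEq p j with _ | _
      all_goals {
        by_cases hpj : p = j
        · rw [if_pos hpj] at hv; rw [← hv]; exact hbc p hp
        · rw [if_neg hpj] at hv; rw [← hv]; exact hac p hp }
  -- b j ∈ E i iff i = j (for i j < d)
  have hbmem : ∀ i j, i < d → j < d → (b j ∈ E i ↔ i = j) := by
    intro i j hi hj
    constructor
    · intro hmem
      rcases (hEmem i (b j)).mp hmem with hbj | ⟨p, hp, hv⟩
      · exact absurd hbj (by have := hbc j hj; omega)
      · by_contra hij
        by_cases hpj : p = j
        · subst hpj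
          rw [if_neg (by omega : ¬ p = i)] at hv
          exact hne p hp hv
        · by_cases hpi : p = i
          · subst hpi
            rw [if_pos rfl] at hv
            exact hsep p j _ _ hp hj hpj (Or.inr rfl) (Or.inr rfl) hv
          · rw [if_neg hpi] at hv
            exact hsep p j _ _ hp hj hpj (Or.inl rfl) (Or.inr rfl) hv
    · rintro rfl
      refine (hEmem i (b i)).mpr (Or.inr ⟨i, hi, by rw [if_pos rfl]⟩)
  -- more helper facts
  have hvmm : ∀ j p, min (a p) (b p) ≤ (if p = j then b p else a p) ∧
      (if p = j then b p else a p) ≤ max (a p) (b p) := by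
    intro j p
    by_cases h : p = j <;> simp [h]
  have hstrict : ∀ q p u, q < d → p < d → q ≠ p → (u = a q ∨ u = b q) →
      u < min (a p) (b p) ∨ max (a p) (b p) < u := by
    intro q p u hq hp hqp hu
    rcases Nat.lt_or_ge q p with h | h
    · left
      have hch := sys_chain hal q p h hp
      rcases hu with rfl | rfl
      · have := le_max_left (a q) (b q); omega
      · have := le_max_right (a q) (b q); omega
    · right
      have hpq : p < q := by omega
      have hch := sys_chain hal p q hpq hq
      rcases hu with rfl | rfl
      · have := min_le_left (a q) (b q); omega
      · have := min_le_right (a q) (b q); omega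
  have hvor : ∀ j p, (if p = j then b p else a p) = a p ∨ (if p = j then b p else a p) = b p := by
    intro j p
    by_cases h : p = j <;> simp [h]
  -- cardinalities
  have hinja : Set.InjOn a ↑(Finset.range d) := by
    intro p hp q hq hpq
    simp only [Finset.coe_range, Set.mem_Iio] at hp hq
    by_contra hne'
    exact hsep p q _ _ hp hq hne' (Or.inl rfl) (Or.inl rfl) hpq
  have hz0card : z0.card = d := by
    rw [hz0def, Finset.card_image_of_injOn hinja, Finset.card_range]
  have hElcard : El.card = d + 1 := by
    have h1 : c' ∉ z0 := by
      intro hmem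
      rw [hz0def] at hmem
      obtain ⟨p, hp, hap⟩ := Finset.mem_image.mp hmem
      have := hac p (Finset.mem_range.mp hp); omega
    rw [hEldef, Finset.card_insert_of_notMem h1, hz0card]
  have hEcard : ∀ j, (E j).card = d + 1 := by
    intro j
    have h1 : c ∉ (Finset.range d).image (fun p => if p = j then b p else a p) := by
      intro hmem
      obtain ⟨p, hp, hv⟩ := Finset.mem_image.mp hmem
      have hp' := Finset.mem_range.mp hp
      rcases hvor j p with h | h
      · rw [h] at hv; have := hac p hp'; omega
      · rw [h] at hv; have := hbc p hp'; omega
    have h2 : Set.InjOn (fun p => if p = j then b p else a p) ↑(Finset.range d) := by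
      intro p hp q hq hpq
      simp only [Finset.coe_range, Set.mem_Iio] at hp hq
      by_contra hne'
      have hpq' : (if p = j then b p else a p) = (if q = j then b q else a q) := hpq
      exact hsep p q _ _ hp hq hne' (hvor j p) (hvor j q) hpq'
    rw [hEdef]
    beta_reduce
    rw [Finset.card_insert_of_notMem h1, Finset.card_image_of_injOn h2, Finset.card_range]
  have hinjE : Set.InjOn E ↑(Finset.range d) := by
    intro i hi j hj hij
    simp only [Finset.coe_range, Set.mem_Iio] at hi hj
    have hij' : E i = E j := hij
    have h1 : b j ∈ E j := (hbmem j j hj hj).mpr rfl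
    rw [← hij'] at h1
    exact (hbmem i j hi hj).mp h1
  have hElnotmem : El ∉ (Finset.range d).image E := by
    intro hmem
    obtain ⟨j, hj, hEj⟩ := Finset.mem_image.mp hmem
    have hc'mem : c' ∈ El := (hElmem c').mpr (Or.inl rfl)
    rw [← hEj] at hc'mem
    have := hEltc j c' hc'mem (by omega)
    omega
  have hFcard : F.card = d + 1 := by
    rw [hFdef, Finset.card_insert_of_notMem hElnotmem,
      Finset.card_image_of_injOn hinjE, Finset.card_range]
  have hElF : El ∈ F := by rw [hFdef]; exact Finset.mem_insert_self _ _
  have hEF : ∀ j, j < d → E j ∈ F := by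
    intro j hj
    exact (hFmem (E j)).mpr (Or.inr ⟨j, hj, rfl⟩)
  -- singleton helper
  have hsing : ∀ (e I : Finset ℕ) (w : ℕ), w ∈ e → w ∈ I →
      (∀ x, x ∈ e → x ∈ I → x = w) → (e ∩ I).card = 1 := by
    intro e I w hw hwI huniq
    have h1 : e ∩ I = {w} := by
      ext x
      simp only [Finset.mem_inter, Finset.mem_singleton]
      constructor
      · rintro ⟨h1, h2⟩; exact huniq x h1 h2
      · rintro rfl; exact ⟨hw, hwI⟩
    rw [h1, Finset.card_singleton]
  refine ⟨F, ?_, ⟨hFcard, ?_, ?_, ?_⟩, ?_⟩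
  · -- F ⊆ H
    intro e he
    rcases (hFmem e).mp he with rfl | ⟨j, hj, rfl⟩
    · rw [hEldef]; exact hz0H
    · rw [hEdef]; exact (hT _ (hdev j hj)).2
  · -- ∀ e ∈ F, card = d+1
    intro e he
    rcases (hFmem e).mp he with rfl | ⟨j, hj, rfl⟩
    · exact hElcard
    · exact hEcard j
  · -- every d of the d+1 edges have a common vertex
    intro G hGF hGcard
    obtain ⟨t, htF, rfl⟩ := eq_erase_of_subset_card hGF hFcard hGcard
    rcases (hFmem t).mp htF with rfl | ⟨i, hi, rfl⟩
    · refine ⟨c, ?_⟩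
      intro e he
      obtain ⟨hnee, heF⟩ := Finset.mem_erase.mp he
      rcases (hFmem e).mp heF with rfl | ⟨j, hj, rfl⟩
      · exact absurd rfl hnee
      · exact (hEmem j c).mpr (Or.inl rfl)
    · refine ⟨a i, ?_⟩
      intro e he
      obtain ⟨hnee, heF⟩ := Finset.mem_erase.mp he
      rcases (hFmem e).mp heF with rfl | ⟨j, hj, rfl⟩
      · exact (hElmem (a i)).mpr (Or.inr ⟨i, hi, rfl⟩)
      · have hji : ¬ j = i := by
          intro h; subst h; exact hnee rfl
        refine (hEmem j (a i)).mpr (Or.inr ⟨i, hi, ?_⟩)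
        rw [if_neg (by omega : ¬ i = j)]
  · -- no common vertex
    rintro ⟨x, hx⟩
    have hxEl := hx El hElF
    rcases (hElmem x).mp hxEl with hxc' | ⟨p, hp, hap⟩
    · have h0 : (0:ℕ) < d := by omega
      have hxE0 := hx (E 0) (hEF 0 h0)
      have := hEltc 0 x hxE0 (by omega)
      omega
    · subst hap
      have hxEp := hx (E p) (hEF p hp)
      rcases (hEmem p (a p)).mp hxEp with h | ⟨q, hq, hv⟩
      · have := hac p hp; omega
      · by_cases hqp : q = p
        · subst hqp
          rw [if_pos rfl] at hv
          exact hne q hq hv.symm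
        · rw [if_neg hqp] at hv
          exact hsep q p _ _ hq hp hqp (Or.inl rfl) (Or.inl rfl) hv
  · -- IntervalPartiteExact
    refine ⟨fun j => if j = d then Finset.Icc c c'
      else Finset.Icc (min (a j) (b j)) (max (a j) (b j)), ?_, ?_, ?_⟩
    · intro j _
      beta_reduce
      by_cases hjd : j = d
      · rw [if_pos hjd]; exact ⟨c, c', rfl⟩
      · rw [if_neg hjd]; exact ⟨_, _, rfl⟩
    · intro j j' hjj' hj' x hx y hy
      beta_reduce at hx hy
      by_cases hj'd : j' = d
      · rw [if_pos hj'd] at hy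
        have hjd : ¬ j = d := by omega
        rw [if_neg hjd] at hx
        have hx2 := Finset.mem_Icc.mp hx
        have hy2 := Finset.mem_Icc.mp hy
        have h1 : a j < c := hac j (by omega)
        have h2 : b j < c := hbc j (by omega)
        have := le_max_left (a j) (b j)
        have := le_max_right (a j) (b j)
        have hxm := hx2.2
        have : max (a j) (b j) ≤ Nat.max (a j) (b j) := le_refl _
        have hmlt : max (a j) (b j) < c := Nat.max_lt.mpr ⟨h1, h2⟩
        omega
      · have hjd : ¬ j = d := by omega
        have hj'lt : j' < d := by omega
        rw [if_neg hjd] at hx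
        rw [if_neg hj'd] at hy
        have hch := sys_chain hal j j' hjj' hj'lt
        have hx2 := Finset.mem_Icc.mp hx
        have hy2 := Finset.mem_Icc.mp hy
        omega
    · intro e he
      constructor
      · -- covering
        intro x hxe
        rcases (hFmem e).mp he with rfl | ⟨j, hj, rfl⟩
        · rcases (hElmem x).mp hxe with hxc' | ⟨p, hp, hap⟩
          · exact ⟨d, by omega, by beta_reduce; rw [if_pos rfl, hxc']; exact Finset.mem_Icc.mpr ⟨le_of_lt hcc', le_refl _⟩⟩
          · refine ⟨p, by omega, ?_⟩
            beta_reduce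
            rw [if_neg (by omega : ¬ p = d)]
            subst hap
            exact Finset.mem_Icc.mpr ⟨min_le_left _ _, le_max_left _ _⟩
        · rcases (hEmem j x).mp hxe with hxc | ⟨p, hp, hv⟩
          · exact ⟨d, by omega, by beta_reduce; rw [if_pos rfl, hxc]; exact Finset.mem_Icc.mpr ⟨le_refl _, le_of_lt hcc'⟩⟩
          · refine ⟨p, by omega, ?_⟩
            beta_reduce
            rw [if_neg (by omega : ¬ p = d)]
            subst hv
            exact Finset.mem_Icc.mpr ⟨(hvmm j p).1, (hvmm j p).2⟩
      · -- exactly one point in each interval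
        intro p hp
        beta_reduce
        rcases (hFmem e).mp he with rfl | ⟨j, hj, rfl⟩
        · -- e = El
          by_cases hpd : p = d
          · subst hpd
            rw [if_pos rfl]
            refine hsing _ _ c' ((hElmem c').mpr (Or.inl rfl))
              (Finset.mem_Icc.mpr ⟨le_of_lt hcc', le_refl _⟩) ?_
            intro x hxe hxI
            have hxI2 := Finset.mem_Icc.mp hxI
            rcases (hElmem x).mp hxe with hxc' | ⟨q, hq, haq⟩
            · exact hxc'
            · have := hac q hq; omega
          · have hplt : p < d := by omega
            rw [if_neg hpd]
            refine hsing _ _ (a p) ((hElmem (a p)).mpr (Or.inr ⟨p, hplt, rfl⟩))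
              (Finset.mem_Icc.mpr ⟨min_le_left _ _, le_max_left _ _⟩) ?_
            intro x hxe hxI
            have hxI2 := Finset.mem_Icc.mp hxI
            rcases (hElmem x).mp hxe with hxc' | ⟨q, hq, haq⟩
            · have h1 : a p < c := hac p hplt
              have h2 : b p < c := hbc p hplt
              have := le_max_left (a p) (b p)
              have := le_max_right (a p) (b p)
              omega
            · by_cases hqp : q = p
              · subst hqp; exact haq.symm ▸ rfl
              · subst haq
                rcases hstrict q p (a q) hq hplt hqp (Or.inl rfl) with h | h <;> omega
        · -- e = E j
          by_cases hpd : p = d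
          · subst hpd
            rw [if_pos rfl]
            refine hsing _ _ c ((hEmem j c).mpr (Or.inl rfl))
              (Finset.mem_Icc.mpr ⟨le_refl _, le_of_lt hcc'⟩) ?_
            intro x hxe hxI
            have hxI2 := Finset.mem_Icc.mp hxI
            by_cases hxc : x = c
            · exact hxc
            · have := hEltc j x hxe hxc; omega
          · have hplt : p < d := by omega
            rw [if_neg hpd]
            refine hsing _ _ (if p = j then b p else a p)
              ((hEmem j _).mpr (Or.inr ⟨p, hplt, rfl⟩))
              (Finset.mem_Icc.mpr ⟨(hvmm j p).1, (hvmm j p).2⟩) ?_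
            intro x hxe hxI
            have hxI2 := Finset.mem_Icc.mp hxI
            rcases (hEmem j x).mp hxe with hxc | ⟨q, hq, hv⟩
            · have h1 : a p < c := hac p hplt
              have h2 : b p < c := hbc p hplt
              have := le_max_left (a p) (b p)
              have := le_max_right (a p) (b p)
              omega
            · by_cases hqp : q = p
              · subst hqp; exact hv.symm ▸ rfl
              · subst hv
                rcases hstrict q p _ hq hplt hqp (hvor j q) with h | h <;> omega


lemma lift_step {d r n c : ℕ} (hd : 2 ≤ d) (hr : 1 ≤ r) {H R : Finset (Finset ℕ)}
    (A : Finset ℕ → Finset ℕ)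
    (hA : ∀ z ∈ R, d + 1 ≤ (A z).card ∧
      ∀ y ∈ A z, (1 ≤ y ∧ y ≤ n) ∧ c < y ∧ insert y z ∈ H)
    (hR : ∀ z ∈ R, z.card = r ∧ (∀ x ∈ z, x < c))
    (hG : GoodCopy d r R) : GoodCopy d (r+1) H := by
  classical
  obtain ⟨Fb, hFbR, ⟨hFbcard, hFbcards, hFbcommon, hFbempty⟩, J, hJint, hJprec, hJprop⟩ := hG
  have hFbne : Fb.Nonempty := Finset.card_pos.mp (by omega)
  obtain ⟨z1, hz1⟩ := hFbne
  have hc1 : 1 ≤ c := by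
    obtain ⟨hzc, hzlt⟩ := hR z1 (hFbR hz1)
    have hzne : z1.Nonempty := Finset.card_pos.mp (by omega)
    obtain ⟨x, hxz⟩ := hzne
    have := hzlt x hxz
    omega
  obtain ⟨f, hfinj, hfmem⟩ := sdr Fb A
    (by
      intro z hz
      rw [hFbcard]
      exact (hA z (hFbR hz)).1)
  have hzlt : ∀ z ∈ Fb, ∀ x ∈ z, x < c := fun z hz => (hR z (hFbR hz)).2
  have hfz : ∀ z ∈ Fb, (1 ≤ f z ∧ f z ≤ n) ∧ c < f z ∧ insert (f z) z ∈ H := by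
    intro z hz
    exact (hA z (hFbR hz)).2 (f z) (hfmem z hz)
  have hfznotz : ∀ z ∈ Fb, f z ∉ z := by
    intro z hz hmem
    have h1 := hzlt z hz (f z) hmem
    have h2 := (hfz z hz).2.1
    omega
  have hinjlift : Set.InjOn (fun z => insert (f z) z) ↑Fb := by
    intro w1 h1 w2 h2 heq
    have h1' : w1 ∈ Fb := h1
    have h2' : w2 ∈ Fb := h2
    have heq' : insert (f w1) w1 = insert (f w2) w2 := heq
    ext x
    constructor
    · intro hx
      have : x ∈ insert (f w2) w2 := by
        rw [← heq']; exact Finset.mem_insert_of_mem hx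
      rcases Finset.mem_insert.mp this with hxf | h
      · have ha := hzlt w1 h1' x hx
        have hb := (hfz w2 h2').2.1
        omega
      · exact h
    · intro hx
      have : x ∈ insert (f w1) w1 := by
        rw [heq']; exact Finset.mem_insert_of_mem hx
      rcases Finset.mem_insert.mp this with hxf | h
      · have ha := hzlt w2 h2' x hx
        have hb := (hfz w1 h1').2.1
        omega
      · exact h
  have hsing : ∀ (e I : Finset ℕ) (w : ℕ), w ∈ e → w ∈ I →
      (∀ x, x ∈ e → x ∈ I → x = w) → (e ∩ I).card = 1 := by
    intro e I w hw hwI huniq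
    have h1 : e ∩ I = {w} := by
      ext x
      simp only [Finset.mem_inter, Finset.mem_singleton]
      constructor
      · rintro ⟨hx1, hx2⟩; exact huniq x hx1 hx2
      · rintro rfl; exact ⟨hw, hwI⟩
    rw [h1, Finset.card_singleton]
  -- interval data
  have hJ' : ∀ j, ∃ aa bb, j < r → J j = Finset.Icc aa bb := by
    intro j
    by_cases hj : j < r
    · obtain ⟨aa, bb, h⟩ := hJint j hj; exact ⟨aa, bb, fun _ => h⟩
    · exact ⟨0, 0, fun h => absurd h hj⟩
  choose α β hab using hJ'
  have hclip : ∀ j, j < r → ∀ x, (x ∈ Finset.Icc (α j) (min (β j) (c-1)) ↔ (x ∈ J j ∧ x < c)) := by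
    intro j hj x
    rw [hab j hj, Finset.mem_Icc, Finset.mem_Icc]
    omega
  refine ⟨Fb.image (fun z => insert (f z) z), ?_, ⟨?_, ?_, ?_, ?_⟩, ?_⟩
  · -- ⊆ H
    intro e he
    obtain ⟨z, hz, rfl⟩ := Finset.mem_image.mp he
    exact (hfz z hz).2.2
  · -- card
    rw [Finset.card_image_of_injOn hinjlift, hFbcard]
  · -- edge cards
    intro e he
    obtain ⟨z, hz, rfl⟩ := Finset.mem_image.mp he
    rw [Finset.card_insert_of_notMem (hfznotz z hz), hFbcards z hz]
  · -- common vertex for d of them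
    intro G hGF hGcard
    have hFcard : (Fb.image (fun z => insert (f z) z)).card = d + 1 := by
      rw [Finset.card_image_of_injOn hinjlift, hFbcard]
    obtain ⟨t, htF, rfl⟩ := eq_erase_of_subset_card hGF hFcard hGcard
    obtain ⟨zt, hztFb, hteq⟩ := Finset.mem_image.mp htF
    obtain ⟨x, hxall⟩ := hFbcommon (Fb.erase zt) (Finset.erase_subset _ _)
      (by rw [Finset.card_erase_of_mem hztFb, hFbcard]; omega)
    refine ⟨x, ?_⟩
    intro e he
    obtain ⟨hnee, heF⟩ := Finset.mem_erase.mp he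
    obtain ⟨z, hzFb, rfl⟩ := Finset.mem_image.mp heF
    have hzzt : z ≠ zt := by
      intro h
      apply hnee
      rw [h, hteq]
    exact Finset.mem_insert_of_mem (hxall z (Finset.mem_erase.mpr ⟨hzzt, hzFb⟩))
  · -- no common vertex
    rintro ⟨x, hx⟩
    by_cases hall : ∀ z ∈ Fb, x ∈ z
    · exact hFbempty ⟨x, hall⟩
    · push_neg at hall
      obtain ⟨z0, hz0Fb, hxz0⟩ := hall
      have hx0 := hx _ (Finset.mem_image_of_mem _ hz0Fb)
      have hxfz0 : x = f z0 := by
        rcases Finset.mem_insert.mp hx0 with h | h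
        · exact h
        · exact absurd h hxz0
      have h1lt : 1 < Fb.card := by omega
      obtain ⟨z1', hz1'Fb, hz1ne⟩ := Finset.exists_mem_ne h1lt z0
      have hx1 := hx _ (Finset.mem_image_of_mem _ hz1'Fb)
      rcases Finset.mem_insert.mp hx1 with h | h
      · apply hz1ne
        apply hfinj hz1'Fb hz0Fb
        rw [← h, ← hxfz0]
      · have ha := hzlt z1' hz1'Fb x h
        have hb := (hfz z0 hz0Fb).2.1
        omega
  · -- IntervalPartiteExact
    refine ⟨fun j => if j = r then Finset.Icc (c+1) n
      else Finset.Icc (α j) (min (β j) (c-1)), ?_, ?_, ?_⟩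
    · intro j _
      beta_reduce
      by_cases hjr : j = r
      · rw [if_pos hjr]; exact ⟨_, _, rfl⟩
      · rw [if_neg hjr]; exact ⟨_, _, rfl⟩
    · intro j j' hjj' hj' x hx y hy
      beta_reduce at hx hy
      by_cases hj'r : j' = r
      · rw [if_pos hj'r] at hy
        have hjr : ¬ j = r := by omega
        rw [if_neg hjr] at hx
        have hjlt : j < r := by omega
        have hx2 := ((hclip j hjlt x).mp hx).2
        have hy2 := (Finset.mem_Icc.mp hy).1
        omega
      · have hjr : ¬ j = r := by omega
        rw [if_neg hj'r] at hy
        rw [if_neg hjr] at hx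
        have hjlt : j < r := by omega
        have hj'lt : j' < r := by omega
        have hx2 := ((hclip j hjlt x).mp hx).1
        have hy2 := ((hclip j' hj'lt y).mp hy).1
        exact hJprec j j' hjj' hj'lt x hx2 y hy2
    · intro e he
      obtain ⟨z, hz, rfl⟩ := Finset.mem_image.mp he
      have hzprop := hJprop z hz
      constructor
      · -- covering
        intro x hxe
        rcases Finset.mem_insert.mp hxe with rfl | hxz
        · refine ⟨r, by omega, ?_⟩
          beta_reduce
          rw [if_pos rfl]
          have h1 := (hfz z hz).1
          have h2 := (hfz z hz).2.1
          exact Finset.mem_Icc.mpr ⟨by omega, h1.2⟩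
        · obtain ⟨j, hj, hxJ⟩ := hzprop.1 x hxz
          refine ⟨j, by omega, ?_⟩
          beta_reduce
          rw [if_neg (by omega : ¬ j = r)]
          exact (hclip j hj x).mpr ⟨hxJ, hzlt z hz x hxz⟩
      · -- exact counts
        intro p hp
        beta_reduce
        by_cases hpr : p = r
        · rw [if_pos hpr]
          refine hsing _ _ (f z) (Finset.mem_insert_self _ _) ?_ ?_
          · have h1 := (hfz z hz).1
            have h2 := (hfz z hz).2.1
            exact Finset.mem_Icc.mpr ⟨by omega, h1.2⟩
          · intro x hxe hxI
            rcases Finset.mem_insert.mp hxe with h | h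
            · exact h
            · have h1 := hzlt z hz x h
              have h2 := (Finset.mem_Icc.mp hxI).1
              omega
        · rw [if_neg hpr]
          have hplt : p < r := by omega
          have hcount := hzprop.2 p hplt
          have hEq : (insert (f z) z) ∩ Finset.Icc (α p) (min (β p) (c-1))
              = z ∩ J p := by
            ext x
            simp only [Finset.mem_inter, Finset.mem_insert]
            constructor
            · rintro ⟨h1 | h1, h2⟩
              · have h3 := ((hclip p hplt x).mp h2).2
                have h4 := (hfz z hz).2.1
                omega
              · exact ⟨h1, ((hclip p hplt x).mp h2).1⟩
            · rintro ⟨h1, h2⟩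
              exact ⟨Or.inr h1, (hclip p hplt x).mpr ⟨h2, hzlt z hz x h1⟩⟩
          rw [hEq]
          exact hcount



theorem lx (d : ℕ) (hd : 2 ≤ d) (n : ℕ) :
    ∀ r, d + 1 ≤ r → ∀ H : Finset (Finset ℕ),
    (∀ e ∈ H, e.card = r ∧ e ⊆ Finset.Icc 1 n) →
    ¬ GoodCopy d r H → H.card ≤ (d+1) * (r - d) * n ^ (r-1) := by
  intro r hr
  induction r, hr using Nat.le_induction with
  | base =>
      intro H hmem hno
      have hmain := scan n (d+1) 1 (d * n ^ (d-1)) (by omega) H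
        (fun c z => (∀ x ∈ z, x < c) ∧ insert c z ∈ H ∧
            ∃ c' ∈ Finset.Icc (c+1) n, insert c' z ∈ H) hmem ?hbad ?hcell
      case hbad =>
        intro z _ S hSsub hSnP
        refine le_trans (Finset.card_le_card ?_) (top_le_one (apexSet n H z))
        intro c hc
        have hcA := hSsub hc
        refine Finset.mem_filter.mpr ⟨hcA, ?_⟩
        intro c' hc'A
        by_contra hlt
        obtain ⟨hcI, hclt, hcins⟩ := Finset.mem_filter.mp hcA
        obtain ⟨hc'I, hc'lt, hc'ins⟩ := Finset.mem_filter.mp hc'A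
        exact hSnP c hc ⟨hclt, hcins, c',
          Finset.mem_Icc.mpr ⟨by omega, (Finset.mem_Icc.mp hc'I).2⟩, hc'ins⟩
      case hcell =>
        intro c _ S hSsub hSP
        have hexp : (d+1) - 1 = d := by omega
        refine ads n d (by omega) S
          (((Finset.Icc 1 n).powersetCard d).filter (fun z =>
            (∀ x ∈ z, x < c) ∧ ∃ c' ∈ Finset.Icc (c+1) n, insert c' z ∈ H)) ?_ ?_ ?_
        · intro z hz
          have hzB := hSsub hz
          rw [hexp] at hzB
          obtain ⟨h1, h2, h3⟩ := hSP z hz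
          simp only [Finset.mem_filter]
          exact ⟨hzB, h1, h3⟩
        · intro e he
          have heB := hSsub he
          rw [hexp, Finset.mem_powersetCard] at heB
          exact ⟨heB.2, heB.1⟩
        · intro hS
          apply hno
          refine lift_base (c := c) hd ?_ ?_ hS
          · intro z hz
            obtain ⟨h1, h2, h3⟩ := hSP z hz
            exact ⟨h1, h2⟩
          · intro z hz
            simp only [Finset.mem_filter] at hz
            obtain ⟨-, h1, c', hc'mem, hc'ins⟩ := hz
            refine ⟨h1, c', ?_, hc'ins⟩
            have := (Finset.mem_Icc.mp hc'mem).1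
            omega
      refine le_trans hmain ?_
      have hBcard : ((Finset.Icc 1 n).powersetCard ((d+1)-1)).card ≤ n ^ d := by
        have hexp : (d+1) - 1 = d := by omega
        rw [hexp, Finset.card_powersetCard, Nat.card_Icc]
        simpa using Nat.choose_le_pow n d
      have e1 : n * (d * n ^ (d-1)) = d * n ^ d := by
        have h1 : d - 1 + 1 = d := by omega
        calc n * (d * n ^ (d-1)) = d * (n ^ (d-1) * n) := by ring
          _ = d * n ^ (d-1+1) := by rw [pow_succ]
          _ = d * n ^ d := by rw [h1]
      have e2 : (d+1) * ((d+1) - d) * n ^ ((d+1)-1) = n ^ d + d * n ^ d := by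
        have h1 : (d+1) - 1 = d := by omega
        have h2 : (d+1) - d = 1 := by omega
        rw [h1, h2]; ring
      rw [e2]
      omega
  | succ r hr ih =>
      intro H hmem hno
      have hmain := scan n (r+1) (d+1) ((d+1) * (r - d) * n ^ (r-1)) (by omega) H
        (fun c z => (∀ x ∈ z, x < c) ∧ insert c z ∈ H ∧
          d + 1 ≤ ((Finset.Icc 1 n).filter (fun y => c < y ∧ insert y z ∈ H)).card)
        hmem ?hbad ?hcell
      case hbad =>
        intro z _ S hSsub hSnP
        refine le_trans (Finset.card_le_card ?_) (dtop_card (apexSet n H z) d)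
        intro c hcS
        have hcA := hSsub hcS
        refine Finset.mem_filter.mpr ⟨hcA, ?_⟩
        obtain ⟨hcI, hclt, hcins⟩ := Finset.mem_filter.mp hcA
        have hnP := hSnP c hcS
        have h3 : ¬ (d + 1 ≤
            ((Finset.Icc 1 n).filter (fun y => c < y ∧ insert y z ∈ H)).card) := by
          intro h
          exact hnP ⟨hclt, hcins, h⟩
        have hsub2 : (apexSet n H z).filter (fun y => c < y)
            ⊆ (Finset.Icc 1 n).filter (fun y => c < y ∧ insert y z ∈ H) := by
          intro y hy
          obtain ⟨hyA, hcy⟩ := Finset.mem_filter.mp hy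
          obtain ⟨hyI, hylt, hyins⟩ := Finset.mem_filter.mp hyA
          exact Finset.mem_filter.mpr ⟨hyI, hcy, hyins⟩
        have := Finset.card_le_card hsub2
        omega
      case hcell =>
        intro c _ S hSsub hSP
        have hexp : (r+1) - 1 = r := by omega
        by_contra hcard
        push_neg at hcard
        have hSmem : ∀ e ∈ S, e.card = r ∧ e ⊆ Finset.Icc 1 n := by
          intro e he
          have heB := hSsub he
          rw [hexp, Finset.mem_powersetCard] at heB
          exact ⟨heB.2, heB.1⟩
        have hGC : GoodCopy d r S := by
          by_contra hnoS
          have := ih S hSmem hnoS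
          omega
        apply hno
        refine lift_step (n := n) (c := c) hd (by omega)
          (fun z => (Finset.Icc 1 n).filter (fun y => c < y ∧ insert y z ∈ H)) ?_ ?_ hGC
        · intro z hz
          obtain ⟨h1, h2, h3⟩ := hSP z hz
          refine ⟨h3, ?_⟩
          intro y hy
          obtain ⟨hyI, hcy, hyins⟩ := Finset.mem_filter.mp hy
          exact ⟨Finset.mem_Icc.mp hyI, hcy, hyins⟩
        · intro z hz
          obtain ⟨h1, h2, h3⟩ := hSP z hz
          exact ⟨(hSmem z hz).1, h1⟩
      refine le_trans hmain ?_
      have hBcard : ((Finset.Icc 1 n).powersetCard ((r+1)-1)).card ≤ n ^ r := by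
        have hexp : (r+1) - 1 = r := by omega
        rw [hexp, Finset.card_powersetCard, Nat.card_Icc]
        simpa using Nat.choose_le_pow n r
      have hBcard2 : ((Finset.Icc 1 n).powersetCard ((r+1)-1)).card * (d+1)
          ≤ n ^ r * (d+1) := Nat.mul_le_mul_right _ hBcard
      have e1 : n * ((d+1) * (r-d) * n ^ (r-1)) = (d+1) * (r-d) * n ^ r := by
        have h1 : r - 1 + 1 = r := by omega
        calc n * ((d+1) * (r-d) * n ^ (r-1)) = (d+1) * (r-d) * (n ^ (r-1) * n) := by ring
          _ = (d+1) * (r-d) * n ^ (r-1+1) := by rw [pow_succ]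
          _ = (d+1) * (r-d) * n ^ r := by rw [h1]
      have e2 : (d+1) * ((r+1) - d) * n ^ ((r+1)-1)
          = n ^ r * (d+1) + (d+1) * (r-d) * n ^ r := by
        have h1 : (r+1) - 1 = r := by omega
        have h2 : (r+1) - d = (r-d) + 1 := by omega
        rw [h1, h2]; ring
      rw [e2]
      omega

end OrdSimplex

/-- Theorem 4 (simplices): for r ≥ d+1 ≥ 3, every ordered n-vertex r-graph with no
interval r-partite copy of any d-dimensional r-simplex has at most r^{10dr}·n^{r-1}
edges. -/
theorem simplex_extremal (d r n : ℕ) (hd : 3 ≤ d + 1) (hr : d + 1 ≤ r)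
    (H : Finset (Finset ℕ)) (hH : ∀ e ∈ H, e ⊆ Finset.Icc 1 n ∧ e.card = r)
    (hfree : ¬ ∃ F : Finset (Finset ℕ), IsSimplex d r F ∧ ContainsOrdCopy r F H) :
    H.card ≤ r ^ (10 * d * r) * n ^ (r - 1) := by
  classical
  have hd2 : 2 ≤ d := by omega
  have hfree' : ¬ OrdSimplex.GoodCopy d r H := by
    rintro ⟨F, hFH, hsimp, hexact⟩
    apply hfree
    refine ⟨F, hsimp, id, ?_, ?_, ?_⟩
    · intro x _ y _ h; exact h
    · have himg : F.image (fun e => e.image id) = F := by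
        have : ∀ e : Finset ℕ, e.image id = e := fun e => Finset.image_id
        calc F.image (fun e => e.image id) = F.image (fun e => e) := by
              apply Finset.image_congr
              intro e _
              exact this e
          _ = F := Finset.image_id
      rw [himg]
      exact hFH
    · have himg : F.image (fun e => e.image id) = F := by
        calc F.image (fun e => e.image id) = F.image (fun e => e) := by
              apply Finset.image_congr
              intro e _
              exact Finset.image_id
          _ = F := Finset.image_id
      rw [himg]
      exact hexact
  have hmem : ∀ e ∈ H, e.card = r ∧ e ⊆ Finset.Icc 1 n := by
    intro e he
    exact ⟨(hH e he).2, (hH e he).1⟩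
  have hbound := OrdSimplex.lx d hd2 n r hr H hmem hfree'
  refine le_trans hbound ?_
  have hfactor : (d+1) * (r - d) ≤ r ^ (10 * d * r) := by
    have h1 : (d+1) * (r - d) ≤ r * r := by
      have h2 : d + 1 ≤ r := hr
      have h3 : r - d ≤ r := Nat.sub_le _ _
      exact Nat.mul_le_mul h2 h3
    have h4 : r * r = r ^ 2 := by ring
    have h5 : r ^ 2 ≤ r ^ (10 * d * r) := by
      apply Nat.pow_le_pow_right
      · omega
      · have hd2' : 2 ≤ d := by omega
        have hr3 : 3 ≤ r := by omega
        calc 2 ≤ 10 * 2 * 3 := by norm_num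
          _ ≤ 10 * d * r := by
              apply Nat.mul_le_mul
              · exact Nat.mul_le_mul_left _ hd2'
              · exact hr3
    omega
  exact Nat.mul_le_mul_right _ hfactor
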